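/- Let G = (V, E) be a 3-regular multigraph and let U ⊆ E be a submultiset such that (V, U) is a 2-trail and |U| is minimum among all submultisets U' ⊆ E for which (V, U') is a 2-trail. Then (V, U) is a Hamiltonian path of G, i.e., a path visiting every vertex of V exactly once. -/

import Mathlib

/-- A multigraph on vertex type `V`: a finite multiset of unordered pairs of
vertices (loops and parallel edges allowed). -/
structure Multigraph (V : Type) where
  edges : Multiset (Sym2 V)

namespace Multigraph

open Classical in
/-- The degree of a vertex: number of edge-endpoints at `v`, a loop counting twice. -/
noncomputable def deg {V : Type} (G : Multigraph V) (v : V) : ℕ :=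
  (G.edges.map fun e => if e = Sym2.diag v then 2 else if v ∈ e then 1 else 0).sum

/-- Adjacency in a multigraph. -/
def Adj {V : Type} (G : Multigraph V) (u v : V) : Prop := s(u, v) ∈ G.edges

/-- A multigraph is connected if it has a vertex and any two vertices are joined by a walk. -/
def Connected {V : Type} (G : Multigraph V) : Prop :=
  Nonempty V ∧ ∀ u v : V, Relation.ReflTransGen G.Adj u v

open Classical in
/-- `G` is the homomorphic image of `H` by the onto function `φ`: for all `u v`,
the number of edges of `G` between `u` and `v` equals the number of edges of `H`
whose endpoints are mapped by `φ` to `{u, v}`. -/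
def IsHomImage {V W : Type} (G : Multigraph V) (H : Multigraph W) (φ : W → V) : Prop :=
  Function.Surjective φ ∧
    ∀ u v : V, G.edges.count s(u, v) = (H.edges.map (Sym2.map φ)).count s(u, v)

/-- A tree: a connected multigraph with `|F| = |W| - 1`. -/
def IsTree {W : Type} (H : Multigraph W) : Prop :=
  Connected H ∧ Multiset.card H.edges + 1 = Nat.card W

/-- A multigraph is a `k`-trail if it is the homomorphic image of a (finite)
connected multigraph of maximum degree at most `k`. -/
def IsKTrail {V : Type} (G : Multigraph V) (k : ℕ) : Prop :=
  ∃ (W : Type) (_ : Finite W) (H : Multigraph W) (φ : W → V),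
    Connected H ∧ (∀ w, H.deg w ≤ k) ∧ IsHomImage G H φ

/-- `G` contains a `k`-trail if some submultiset `U` of its edges gives a `k`-trail `(V, U)`. -/
def ContainsKTrail {V : Type} (G : Multigraph V) (k : ℕ) : Prop :=
  ∃ U : Multiset (Sym2 V), U ≤ G.edges ∧ IsKTrail (Multigraph.mk U) k

/-- `lam` is a feasible multiplicity vector for `G`. -/
def FeasibleMult {V : Type} (G : Multigraph V) (lam : V → ℕ) : Prop :=
  ∃ (W : Type) (_ : Finite W) (H : Multigraph W) (φ : W → V),
    Connected H ∧ IsHomImage G H φ ∧ ∀ v : V, Nat.card (φ ⁻¹' {v}) = lam v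

end Multigraph

open Multigraph


/-- The multigraph `(V, U)` is a Hamiltonian path: there is an ordering of all vertices
such that `U` is exactly the multiset of edges between consecutive vertices. -/
def IsHamPathEdges {V : Type} [Finite V] (U : Multiset (Sym2 V)) : Prop :=
  ∃ v : Fin (Nat.card V) → V, Function.Bijective v ∧
    U = Multiset.map (fun i : Fin (Nat.card V - 1) =>
      s(v ⟨i.1, by have := i.2; omega⟩, v ⟨i.1 + 1, by have := i.2; omega⟩))
      Finset.univ.val

namespace CubicAux
open Multigraph Relation
open scoped Classical

variable {α β : Type}

open Classical in
noncomputable def wt (v : α) (e : Sym2 α) : ℕ :=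
  if e = Sym2.diag v then 2 else if v ∈ e then 1 else 0

lemma deg_def (M : Multiset (Sym2 α)) (v : α) :
    (Multigraph.mk M).deg v = (M.map (wt v)).sum := rfl

open Classical in
lemma wt_pair (v p q : α) :
    wt v s(p, q) = (if p = v then 1 else 0) + (if q = v then 1 else 0) := by
  unfold wt
  have hd : (Sym2.diag v) = s(v, v) := rfl
  rw [hd]
  by_cases h1 : p = v <;> by_cases h2 : q = v <;>
    simp [Sym2.eq_iff, Sym2.mem_iff, h1, h2] <;>
    exact ⟨fun h => h1 h.symm, fun h => h2 h.symm⟩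

lemma wt_pos {v : α} {e : Sym2 α} (h : v ∈ e) : 1 ≤ wt v e := by
  unfold wt
  split_ifs <;> omega

lemma deg_cons (e : Sym2 α) (M : Multiset (Sym2 α)) (v : α) :
    (Multigraph.mk (e ::ₘ M)).deg v = wt v e + (Multigraph.mk M).deg v := by
  simp [deg_def, Multiset.map_cons, Multiset.sum_cons]

lemma deg_mono {M N : Multiset (Sym2 α)} (h : M ≤ N) (v : α) :
    (Multigraph.mk M).deg v ≤ (Multigraph.mk N).deg v := by
  obtain ⟨K, rfl⟩ := Multiset.le_iff_exists_add.mp h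
  simp [deg_def, Multiset.map_add, Multiset.sum_add]

lemma deg_erase {e : Sym2 α} {M : Multiset (Sym2 α)} (he : e ∈ M) (v : α) :
    (Multigraph.mk (M.erase e)).deg v + wt v e = (Multigraph.mk M).deg v := by
  conv_rhs => rw [← Multiset.cons_erase he]
  rw [deg_cons]; omega

lemma wt_le_deg {e : Sym2 α} {M : Multiset (Sym2 α)} (he : e ∈ M) (v : α) :
    wt v e ≤ (Multigraph.mk M).deg v := by
  rw [← Multiset.cons_erase he, deg_cons]; omega

lemma two_wt_le_deg {e1 e2 : Sym2 α} {M : Multiset (Sym2 α)} (h1 : e1 ∈ M) (h2 : e2 ∈ M)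
    (hne : e1 ≠ e2) (v : α) :
    wt v e1 + wt v e2 ≤ (Multigraph.mk M).deg v := by
  rw [← Multiset.cons_erase h1, deg_cons]
  have h2' : e2 ∈ M.erase e1 := (Multiset.mem_erase_of_ne (Ne.symm hne)).mpr h2
  have := wt_le_deg h2' v
  omega

lemma exists_edge_of_deg_pos {M : Multiset (Sym2 α)} {v : α}
    (h : 1 ≤ (Multigraph.mk M).deg v) : ∃ e ∈ M, v ∈ e := by
  by_contra hc
  push_neg at hc
  have : (Multigraph.mk M).deg v = 0 := by
    rw [deg_def]
    apply Multiset.sum_eq_zero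
    intro x hx
    obtain ⟨e, he, rfl⟩ := Multiset.mem_map.mp hx
    have hv := hc e he
    unfold wt
    have : ¬ e = Sym2.diag v := by
      rintro rfl; exact hv (by simp [Sym2.diag])
    simp [this, hv]
  omega

lemma sym2_rep (z : Sym2 α) : ∃ p q, z = s(p, q) :=
  Sym2.inductionOn z fun p q => ⟨p, q, rfl⟩

lemma not_mem_erase_of_deg_eq_wt {e : Sym2 α} {M : Multiset (Sym2 α)} {a : α}
    (he : e ∈ M) (hdeg : (Multigraph.mk M).deg a = wt a e) :
    ∀ s ∈ M.erase e, a ∉ s := by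
  intro s hs ha
  have h0 : (Multigraph.mk (M.erase e)).deg a = 0 := by
    have := deg_erase he a; omega
  have := wt_le_deg hs a
  have := wt_pos ha
  omega

lemma adj_of_mem {M : Multiset (Sym2 α)} {u v : α} (h : s(u, v) ∈ M) :
    (Multigraph.mk M).Adj u v := h

lemma adj_symm {M : Multiset (Sym2 α)} {u v : α} (h : (Multigraph.mk M).Adj u v) :
    (Multigraph.mk M).Adj v u := by
  unfold Multigraph.Adj at *
  rwa [Sym2.eq_swap]

lemma deg_pos_of_adj {M : Multiset (Sym2 α)} {u v : α} (h : (Multigraph.mk M).Adj u v) :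
    1 ≤ (Multigraph.mk M).deg u := by
  have h1 := wt_le_deg (M := M) (show s(u,v) ∈ M from h) u
  have h2 : 1 ≤ wt u s(u,v) := wt_pos (by simp)
  omega

lemma liftRTG {r : α → α → Prop} {r' : β → β → Prop} (f : α → β)
    (h : ∀ p q, r p q → Relation.ReflTransGen r' (f p) (f q))
    {u v : α} (huv : Relation.ReflTransGen r u v) :
    Relation.ReflTransGen r' (f u) (f v) := by
  induction huv with
  | refl => exact .refl
  | tail _ hstep ih => exact ih.trans (h _ _ hstep)

lemma rtg_of_rtg_steps {r r' : α → α → Prop}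
    (h : ∀ p q, r p q → Relation.ReflTransGen r' p q)
    {u v : α} (huv : Relation.ReflTransGen r u v) :
    Relation.ReflTransGen r' u v := liftRTG (f := id) h huv

end CubicAux

namespace CubicAux
open Multigraph Relation
open scoped Classical

variable {α β : Type}

lemma adj_symmetric (M : Multiset (Sym2 α)) : Symmetric (Multigraph.mk M).Adj :=
  fun _ _ h => adj_symm h

lemma rtg_adj_symm {M : Multiset (Sym2 α)} {u v : α}
    (h : Relation.ReflTransGen (Multigraph.mk M).Adj u v) :
    Relation.ReflTransGen (Multigraph.mk M).Adj v u :=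
  by
    haveI : Std.Symm (Multigraph.mk M).Adj := ⟨fun _ _ h' => adj_symmetric M h'⟩
    exact (Relation.ReflTransGen.symmetric (r := (Multigraph.mk M).Adj)).symm _ _ h

/-- Removing the unique edge at a degree-one vertex `a` keeps all other
vertices connected. -/
lemma splice {M : Multiset (Sym2 α)} {a x : α} {e : Sym2 α}
    (he : e ∈ M) (hex : e = s(a, x)) (hax : x ≠ a)
    (hnota : ∀ s ∈ M.erase e, a ∉ s)
    {u v : α} (h : Relation.ReflTransGen (Multigraph.mk M).Adj u v)
    (hu : u ≠ a) (hv : v ≠ a) :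
    Relation.ReflTransGen (Multigraph.mk (M.erase e)).Adj u v := by
  classical
  let f : α → α := fun t => if t = a then x else t
  have fa : f a = x := if_pos rfl
  have fo : ∀ t, t ≠ a → f t = t := fun t ht => if_neg ht
  have keyeq : ∀ r : α, s(a, r) ∈ M → r = x := by
    intro r hr
    by_cases hre : s(a, r) = e
    · rw [hex] at hre
      rcases Sym2.eq_iff.mp hre with ⟨_, h2⟩ | ⟨h1, _⟩
      · exact h2
      · exact absurd h1.symm hax
    · exact absurd (by simp) (hnota _ ((Multiset.mem_erase_of_ne hre).mpr hr))
  have key : ∀ p q, (Multigraph.mk M).Adj p q →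
      Relation.ReflTransGen (Multigraph.mk (M.erase e)).Adj (f p) (f q) := by
    intro p q hpq
    have hpq' : s(p, q) ∈ M := hpq
    by_cases ha : a ∈ s(p, q)
    · rcases Sym2.mem_iff.mp ha with h' | h'
      · -- a = p
        have hq : q = x := keyeq q (h' ▸ hpq')
        have hfq : f q = x := by
          rcases eq_or_ne q a with h2 | h2
          · rw [fo q, hq]
            rw [h2] at hq; exact fun hqa => hax (hq ▸ hqa ▸ rfl)
          · rw [fo q h2, hq]
        rw [← h', fa, hfq]
      · -- a = q
        have hp : p = x := keyeq p (by rwa [Sym2.eq_swap, ← h'] at hpq')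
        have hfp : f p = x := by
          rcases eq_or_ne p a with h2 | h2
          · rw [fo p, hp]
            rw [h2] at hp; exact fun hpa => hax (hp ▸ hpa ▸ rfl)
          · rw [fo p h2, hp]
        rw [← h', fa, hfp]
    · have hpa : p ≠ a := fun hh => ha (by simp [hh])
      have hqa : q ≠ a := fun hh => ha (by simp [hh])
      have hne : s(p, q) ≠ e := by
        rw [hex]; intro hh
        rcases Sym2.eq_iff.mp hh with ⟨h1, _⟩ | ⟨_, h2⟩
        · exact hpa h1
        · exact hqa h2
      have hmem : s(p, q) ∈ M.erase e := (Multiset.mem_erase_of_ne hne).mpr hpq'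
      rw [fo p hpa, fo q hqa]
      exact Relation.ReflTransGen.single hmem
  have := liftRTG f key h
  rwa [fo u hu, fo v hv] at this

lemma sym2_map_congr {f g : α → β} {z : Sym2 α} (h : ∀ y ∈ z, f y = g y) :
    Sym2.map f z = Sym2.map g z := by
  obtain ⟨p, q, rfl⟩ := sym2_rep z
  rw [Sym2.map_pair_eq, Sym2.map_pair_eq, h p (by simp), h q (by simp)]

open scoped Classical in
lemma ite_one_zero_congr {P Q : Prop} (h : P ↔ Q) :
    (if P then (1 : ℕ) else 0) = if Q then 1 else 0 := by
  split_ifs with h1 h2 h2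
  · rfl
  · exact absurd (h.mp h1) h2
  · exact absurd (h.mpr h2) h1
  · rfl

lemma deg_map_congr {V' : Type} (E : Multiset (Sym2 α)) (f : α → V') (z : V') (t : α)
    (hw : ∀ s ∈ E, wt z (Sym2.map f s) = wt t s) :
    (Multigraph.mk (E.map (Sym2.map f))).deg z = (Multigraph.mk E).deg t := by
  rw [deg_def, deg_def, Multiset.map_map]
  exact congrArg Multiset.sum (Multiset.map_congr rfl hw)

lemma hom_image_edges {V W : Type} {U : Multiset (Sym2 V)} {H : Multigraph W} {φ : W → V}
    (h : IsHomImage (Multigraph.mk U) H φ) :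
    U = H.edges.map (Sym2.map φ) := by
  classical
  ext z
  obtain ⟨p, q, rfl⟩ := sym2_rep z
  exact h.2 p q

lemma min_deg_one {M : Multiset (Sym2 α)} (hconn : Connected (Multigraph.mk M))
    {w u : α} (hu : u ≠ w) : 1 ≤ (Multigraph.mk M).deg w := by
  rcases Relation.ReflTransGen.cases_head (hconn.2 w u) with heq | ⟨c, hadj, _⟩
  · exact absurd heq.symm hu
  · exact deg_pos_of_adj hadj

lemma rtg_loop_only {M : Multiset (Sym2 α)} {a : α}
    (honly : ∀ c, (Multigraph.mk M).Adj a c → c = a)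
    {u : α} (h : Relation.ReflTransGen (Multigraph.mk M).Adj a u) : u = a := by
  induction h with
  | refl => rfl
  | tail _ hstep ih =>
    subst ih
    exact honly _ hstep

end CubicAux

namespace CubicAux
open Multigraph Relation
open scoped Classical

variable {α β : Type}

lemma sum_deg (M : Multiset (Sym2 α)) (K : Finset α) :
    ∑ v ∈ K, (Multigraph.mk M).deg v = (M.map (fun s => ∑ v ∈ K, wt v s)).sum := by
  induction M using Multiset.induction with
  | empty => simp [deg_def]
  | cons e M ih =>
    simp only [Multiset.map_cons, Multiset.sum_cons, ← ih]
    rw [← Finset.sum_add_distrib]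
    exact Finset.sum_congr rfl fun v _ => deg_cons e M v

lemma sum_wt_pair (K : Finset α) (p q : α) :
    ∑ v ∈ K, wt v s(p, q) = (if p ∈ K then 1 else 0) + (if q ∈ K then 1 else 0) := by
  have : ∀ v ∈ K, wt v s(p, q) = (if p = v then 1 else 0) + (if q = v then 1 else 0) :=
    fun v _ => wt_pair v p q
  rw [Finset.sum_congr rfl this, Finset.sum_add_distrib, Finset.sum_ite_eq, Finset.sum_ite_eq]

lemma component_even {M : Multiset (Sym2 α)} (K : Finset α)
    (hK : ∀ p q : α, s(p, q) ∈ M → (p ∈ K ↔ q ∈ K)) :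
    Even (∑ v ∈ K, (Multigraph.mk M).deg v) := by
  rw [sum_deg]
  rw [even_iff_two_dvd]
  apply Multiset.dvd_sum
  intro y hy
  obtain ⟨s, hs, rfl⟩ := Multiset.mem_map.mp hy
  obtain ⟨p, q, rfl⟩ := sym2_rep s
  rw [sum_wt_pair]
  by_cases hp : p ∈ K
  · have hq : q ∈ K := (hK p q hs).mp hp
    simp [hp, hq]
  · have hq : q ∉ K := fun h => hp ((hK p q hs).mpr h)
    simp [hp, hq]

/-- Removing an edge from a connected graph where all degrees are two keeps it
connected. -/
lemma erase_connected_of_deg_two [Fintype α] {M : Multiset (Sym2 α)} {a x : α} {e : Sym2 α}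
    (he : e ∈ M) (hex : e = s(a, x)) (hax : x ≠ a)
    (hconn : Connected (Multigraph.mk M)) (hdeg : ∀ v, (Multigraph.mk M).deg v = 2) :
    Connected (Multigraph.mk (M.erase e)) := by
  set E₁ := M.erase e with hE₁
  have hwx : wt x e = 1 := by
    rw [hex, wt_pair]
    simp [Ne.symm hax]
  have hdx : (Multigraph.mk E₁).deg x = 1 := by
    have h := deg_erase he x
    rw [hdeg x, ← hE₁] at h; omega
  set K : Finset α := Finset.univ.filter
    (fun u => Relation.ReflTransGen (Multigraph.mk E₁).Adj x u) with hKdef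
  have hmemK : ∀ u, u ∈ K ↔ Relation.ReflTransGen (Multigraph.mk E₁).Adj x u := by
    intro u; simp [hKdef]
  have hxK : x ∈ K := (hmemK x).mpr .refl
  have hKclosed : ∀ p q : α, s(p, q) ∈ E₁ → (p ∈ K ↔ q ∈ K) := by
    intro p q hpq
    constructor
    · intro hp
      exact (hmemK q).mpr (((hmemK p).mp hp).tail (adj_of_mem hpq))
    · intro hq
      exact (hmemK p).mpr (((hmemK q).mp hq).tail (adj_symm (adj_of_mem hpq)))
  by_cases haK : a ∈ K
  · have hxa : Relation.ReflTransGen (Multigraph.mk E₁).Adj x a := (hmemK a).mp haK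
    refine ⟨hconn.1, fun u v => ?_⟩
    refine rtg_of_rtg_steps ?_ (hconn.2 u v)
    intro p q hpq
    have hpq' : s(p, q) ∈ M := hpq
    by_cases hne : s(p, q) = e
    · rw [hex] at hne
      rcases Sym2.eq_iff.mp hne with ⟨h1, h2⟩ | ⟨h1, h2⟩
      · rw [h1, h2]; exact rtg_adj_symm hxa
      · rw [h1, h2]; exact hxa
    · exact Relation.ReflTransGen.single ((Multiset.mem_erase_of_ne hne).mpr hpq')
  · exfalso
    have heven := component_even (M := E₁) K hKclosed
    have hodd : ∑ v ∈ K, (Multigraph.mk E₁).deg v = 1 + 2 * (K.erase x).card := by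
      rw [← Finset.add_sum_erase K _ hxK, hdx]
      congr 1
      have : ∀ v ∈ K.erase x, (Multigraph.mk E₁).deg v = 2 := by
        intro v hv
        have hvx : v ≠ x := (Finset.mem_erase.mp hv).1
        have hvK : v ∈ K := (Finset.mem_erase.mp hv).2
        have hva : v ≠ a := fun h => haK (h ▸ hvK)
        have hwv : wt v e = 0 := by
          rw [hex, wt_pair]
          simp [Ne.symm hva, Ne.symm hvx]
        have h := deg_erase (M := M) he v
        rw [hdeg v, hwv, ← hE₁] at h
        omega
      rw [Finset.sum_congr rfl this, Finset.sum_const, smul_eq_mul, mul_comm]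
    rw [hodd] at heven
    obtain ⟨c, hc⟩ := heven
    omega

end CubicAux

namespace CubicAux
open Multigraph Relation
open scoped Classical

variable {α β : Type}

lemma reverse_enum {T : Type} {U : Multiset (Sym2 T)} {m : ℕ} {v : Fin m → T}
    (hbij : Function.Bijective v)
    (hcons : ∀ (j : ℕ) (hj : j + 1 < m), s(v ⟨j, by omega⟩, v ⟨j + 1, hj⟩) ∈ U) :
    ∃ w : Fin m → T, Function.Bijective w ∧
      (∀ (j : ℕ) (hj : j + 1 < m), s(w ⟨j, by omega⟩, w ⟨j + 1, hj⟩) ∈ U) ∧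
      ∀ (h0 : 0 < m), w ⟨0, h0⟩ = v ⟨m - 1, by omega⟩ := by
  let σ : Fin m → Fin m := fun i => ⟨m - 1 - i.1, by have := i.2; omega⟩
  have hσ : Function.Involutive σ := by
    intro i
    apply Fin.ext
    show m - 1 - (m - 1 - i.1) = i.1
    have := i.2; omega
  refine ⟨v ∘ σ, hbij.comp hσ.bijective, ?_, ?_⟩
  · intro j hj
    have e1 : (v ∘ σ) ⟨j, by omega⟩ = v ⟨m - 2 - j + 1, by omega⟩ := by
      show v _ = v _
      congr 1
      apply Fin.ext
      show m - 1 - j = m - 2 - j + 1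
      omega
    have e2 : (v ∘ σ) ⟨j + 1, hj⟩ = v ⟨m - 2 - j, by omega⟩ := by
      show v _ = v _
      congr 1
      apply Fin.ext
      show m - 1 - (j + 1) = m - 2 - j
      omega
    rw [e1, e2, Sym2.eq_swap]
    exact hcons (m - 2 - j) (by omega)
  · intro h0
    exact congrArg v (Fin.ext (by show m - 1 - 0 = m - 1; omega))

set_option maxHeartbeats 2000000 in
/-- Core structure lemma: a connected multigraph with max degree 2 admits a
Hamiltonian-path-like enumeration of its vertices. -/
lemma path_enum : ∀ (k : ℕ) (V : Type) [Finite V] (U : Multiset (Sym2 V)),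
    Multiset.card U = k → 1 ≤ Nat.card V →
    Connected (Multigraph.mk U) → (∀ v, (Multigraph.mk U).deg v ≤ 2) →
    ∃ v : Fin (Nat.card V) → V, Function.Bijective v ∧
      ∀ (j : ℕ) (hj : j + 1 < Nat.card V), s(v ⟨j, by omega⟩, v ⟨j + 1, hj⟩) ∈ U := by
  intro k
  induction k using Nat.strong_induction_on with
  | _ k IH =>
  intro V _ U hcard hV hconn hdeg
  rcases eq_or_lt_of_le hV with h1 | h2
  · -- Nat.card V = 1
    obtain ⟨hss, ⟨v₀⟩⟩ := Nat.card_eq_one_iff_unique.mp h1.symm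
    refine ⟨fun _ => v₀, ⟨?_, ?_⟩, ?_⟩
    · intro i1 i2 _
      apply Fin.ext
      have := i1.2; have := i2.2; omega
    · intro u
      exact ⟨⟨0, by omega⟩, Subsingleton.elim _ _⟩
    · intro j hj
      omega
  · -- 2 ≤ Nat.card V
    have hNT : Nontrivial V := Finite.one_lt_card_iff_nontrivial.mp h2
    have hdeg1 : ∀ v : V, 1 ≤ (Multigraph.mk U).deg v := by
      intro v
      obtain ⟨u, hu⟩ := exists_ne v
      exact min_deg_one hconn hu
    have hk1 : 1 ≤ k := by
      obtain ⟨e, he, _⟩ := exists_edge_of_deg_pos (hdeg1 (Classical.arbitrary V))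
      have := Multiset.card_pos_iff_exists_mem.mpr ⟨e, he⟩
      omega
    by_cases hA : ∃ a, (Multigraph.mk U).deg a = 1
    · -- Case A : there is a degree-one vertex
      obtain ⟨a, ha1⟩ := hA
      obtain ⟨e, heU, haE⟩ := exists_edge_of_deg_pos (M := U) (v := a) (by omega)
      obtain ⟨x, hex⟩ := Sym2.mem_iff_exists.mp haE
      have hxa : x ≠ a := by
        intro hh
        have h2' : wt a e = 2 := by rw [hex, hh, wt_pair]; simp
        have := wt_le_deg heU a
        omega
      have hwa : wt a e = 1 := by
        rw [hex, wt_pair]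
        simp [hxa]
      have hnota : ∀ s ∈ U.erase e, a ∉ s :=
        not_mem_erase_of_deg_eq_wt heU (by rw [ha1, hwa])
      -- the reduced graph on V' = V \ {a}
      set V' : Type := {u : V // u ≠ a} with hV'def
      have hNV' : Nonempty V' := ⟨⟨x, hxa⟩⟩
      letI : Fintype V := Fintype.ofFinite V
      have hcardV' : Nat.card V' = Nat.card V - 1 := by
        rw [Nat.card_eq_fintype_card, Nat.card_eq_fintype_card]
        rw [Fintype.card_subtype_compl (p := fun u => u = a)]
        simp
      let down : V → V' := fun u => if h : u = a then ⟨x, hxa⟩ else ⟨u, h⟩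
      have hdown_ne : ∀ (u : V) (h : u ≠ a), down u = ⟨u, h⟩ := fun u h => dif_neg h
      set U' : Multiset (Sym2 V') := (U.erase e).map (Sym2.map down) with hU'def
      have hcardU' : Multiset.card U' = k - 1 := by
        rw [hU'def, Multiset.card_map, Multiset.card_erase_of_mem heU, hcard]
        rfl
      -- connectivity of the reduced graph
      have hconn' : Connected (Multigraph.mk U') := by
        refine ⟨hNV', fun z1 z2 => ?_⟩
        have h0 := hconn.2 z1.val z2.val
        have h1 := splice heU hex hxa hnota h0 z1.prop z2.prop
        have hstep : ∀ p q : V, (Multigraph.mk (U.erase e)).Adj p q →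
            Relation.ReflTransGen (Multigraph.mk U').Adj (down p) (down q) := by
          intro p q hpq
          refine Relation.ReflTransGen.single ?_
          show s(down p, down q) ∈ U'
          rw [← Sym2.map_pair_eq down]
          exact Multiset.mem_map_of_mem _ hpq
        have h2 := liftRTG down hstep h1
        rwa [hdown_ne _ z1.prop, hdown_ne _ z2.prop] at h2
      -- degrees in the reduced graph
      have hwt_down : ∀ s ∈ U.erase e, ∀ z : V', wt z (Sym2.map down s) = wt z.val s := by
        intro s hs z
        obtain ⟨p, q, rfl⟩ := sym2_rep s
        have hp : p ≠ a := fun hh => hnota _ hs (hh ▸ (by simp : p ∈ s(p, q)))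
        have hq : q ≠ a := fun hh => hnota _ hs (hh ▸ (by simp : q ∈ s(p, q)))
        have h1 : ((⟨p, hp⟩ : V') = z) ↔ p = z.val :=
          ⟨fun h => congrArg Subtype.val h, fun h => Subtype.ext h⟩
        have h2 : ((⟨q, hq⟩ : V') = z) ↔ q = z.val :=
          ⟨fun h => congrArg Subtype.val h, fun h => Subtype.ext h⟩
        rw [Sym2.map_pair_eq, hdown_ne p hp, hdown_ne q hq, wt_pair, wt_pair,
          ite_one_zero_congr h1, ite_one_zero_congr h2]
      have hdeg' : ∀ z : V', (Multigraph.mk U').deg z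
          = (Multigraph.mk (U.erase e)).deg z.val := fun z =>
        deg_map_congr _ down z z.val (fun s hs => hwt_down s hs z)
      have hdeg2' : ∀ z : V', (Multigraph.mk U').deg z ≤ 2 := by
        intro z
        rw [hdeg' z]
        exact le_trans (deg_mono (Multiset.erase_le e U) z.val) (hdeg z.val)
      have hdegx : (Multigraph.mk U').deg ⟨x, hxa⟩ ≤ 1 := by
        rw [hdeg']
        show (Multigraph.mk (U.erase e)).deg x ≤ 1
        have h5 := deg_erase heU x
        have h6 : wt x e = 1 := by
          rw [hex, wt_pair]
          simp [Ne.symm hxa]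
        have := hdeg x
        omega
      -- apply the induction hypothesis
      obtain ⟨w0, hw0bij, hw0cons⟩ :=
        IH (k - 1) (by omega) V' U' hcardU' (by omega) hconn' hdeg2'
      have hmn : Nat.card V' = Nat.card V - 1 := hcardV'
      obtain ⟨j0, hj0x⟩ := hw0bij.surjective ⟨x, hxa⟩
      -- x sits at an endpoint of the enumeration of V'
      have hj0ends : j0.1 = 0 ∨ j0.1 = Nat.card V' - 1 := by
        by_contra hc
        push_neg at hc
        have hj0lt := j0.2
        have h1' : 1 ≤ j0.1 := by omega
        have h2' : j0.1 + 1 < Nat.card V' := by omega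
        have hcons1 := hw0cons (j0.1 - 1) (by omega)
        have hcons2 := hw0cons j0.1 h2'
        have hidx1 : w0 ⟨j0.1 - 1 + 1, by omega⟩ = w0 j0 :=
          congrArg w0 (Fin.ext (show j0.1 - 1 + 1 = j0.1 by omega))
        have hidx2 : w0 ⟨j0.1, by omega⟩ = w0 j0 :=
          congrArg w0 (Fin.ext rfl)
        rw [hidx1] at hcons1
        rw [hidx2] at hcons2
        have hne : s(w0 ⟨j0.1 - 1, by omega⟩, w0 j0) ≠ s(w0 j0, w0 ⟨j0.1 + 1, h2'⟩) := by
          intro hh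
          rcases Sym2.eq_iff.mp hh with ⟨hx1, _⟩ | ⟨hx1, _⟩
          · have h' := hw0bij.injective hx1
            have h'' : j0.1 - 1 = j0.1 := congrArg Fin.val h'
            omega
          · have h' := hw0bij.injective hx1
            have h'' : j0.1 - 1 = j0.1 + 1 := congrArg Fin.val h'
            omega
        have hboth := two_wt_le_deg hcons1 hcons2 hne ⟨x, hxa⟩
        have hw1 : 1 ≤ wt (⟨x, hxa⟩ : V') s(w0 ⟨j0.1 - 1, by omega⟩, w0 j0) := by
          apply wt_pos
          rw [hj0x]
          simp
        have hw2 : 1 ≤ wt (⟨x, hxa⟩ : V') s(w0 j0, w0 ⟨j0.1 + 1, h2'⟩) := by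
          apply wt_pos
          rw [hj0x]
          simp
        omega
      -- normalize so that x is at position 0
      obtain ⟨w, hwbij, hwcons, hwx⟩ : ∃ w : Fin (Nat.card V') → V', Function.Bijective w ∧
          (∀ (j : ℕ) (hj : j + 1 < Nat.card V'), s(w ⟨j, by omega⟩, w ⟨j + 1, hj⟩) ∈ U') ∧
          ∀ (h0 : 0 < Nat.card V'), w ⟨0, h0⟩ = ⟨x, hxa⟩ := by
        rcases hj0ends with h | h
        · refine ⟨w0, hw0bij, hw0cons, fun h0 => ?_⟩
          rw [← hj0x]
          exact congrArg w0 (Fin.ext h.symm)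
        · obtain ⟨w, hb, hc', hlast⟩ := reverse_enum hw0bij hw0cons
          refine ⟨w, hb, hc', fun h0 => ?_⟩
          rw [hlast h0, ← hj0x]
          exact congrArg w0 (Fin.ext h.symm)
      -- build the enumeration of V
      have hn2 : 2 ≤ Nat.card V := h2
      let v : Fin (Nat.card V) → V := fun i =>
        if h0 : i.1 = 0 then a else (w ⟨i.1 - 1, by have := i.2; omega⟩).val
      have hv0 : ∀ (h : 0 < Nat.card V), v ⟨0, h⟩ = a := fun h => dif_pos rfl
      have hvsucc : ∀ (t : ℕ) (h : t + 1 < Nat.card V),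
          v ⟨t + 1, h⟩ = (w ⟨t, by omega⟩).val := by
        intro t h
        show dite _ _ _ = _
        rw [dif_neg (Nat.succ_ne_zero t)]
        exact congrArg (fun z : Fin (Nat.card V') => (w z).val)
          (Fin.ext (show t + 1 - 1 = t by omega))
      have hbij : Function.Bijective v := by
        constructor
        · intro i1 i2 h12
          by_cases hz1 : i1.1 = 0 <;> by_cases hz2 : i2.1 = 0
          · exact Fin.ext (by omega)
          · rw [show v i1 = a from dif_pos hz1,
              show v i2 = (w ⟨i2.1 - 1, by have := i2.2; omega⟩).val from dif_neg hz2] at h12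
            exact absurd h12.symm (w _).prop
          · rw [show v i1 = (w ⟨i1.1 - 1, by have := i1.2; omega⟩).val from dif_neg hz1,
              show v i2 = a from dif_pos hz2] at h12
            exact absurd h12 (w _).prop
          · rw [show v i1 = (w ⟨i1.1 - 1, by have := i1.2; omega⟩).val from dif_neg hz1,
              show v i2 = (w ⟨i2.1 - 1, by have := i2.2; omega⟩).val from dif_neg hz2] at h12
            have h' := hwbij.injective (Subtype.ext h12)
            have h'' : i1.1 - 1 = i2.1 - 1 := congrArg Fin.val h'
            exact Fin.ext (show i1.1 = i2.1 by omega)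
        · intro u
          by_cases hu : u = a
          · exact ⟨⟨0, by omega⟩, by rw [hv0 (by omega), hu]⟩
          · obtain ⟨i, hi⟩ := hwbij.surjective ⟨u, hu⟩
            refine ⟨⟨i.1 + 1, by have := i.2; omega⟩, ?_⟩
            rw [hvsucc i.1 (by have := i.2; omega)]
            rw [show (⟨i.1, by omega⟩ : Fin (Nat.card V')) = i from Fin.ext rfl, hi]
      refine ⟨v, hbij, ?_⟩
      intro j hj
      by_cases hj0 : j = 0
      · subst hj0
        rw [hv0 (by omega), hvsucc 0 hj, hwx (by omega)]
        rw [← hex]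
        exact heU
      · have hj1 : 1 ≤ j := by omega
        have hv1 : v ⟨j, by omega⟩ = (w ⟨j - 1, by omega⟩).val := by
          show dite _ _ _ = _
          rw [dif_neg hj0]
        have hv2 : v ⟨j + 1, hj⟩ = (w ⟨j, by omega⟩).val := hvsucc j hj
        rw [hv1, hv2]
        have hc := hwcons (j - 1) (by omega)
        have hidx : w ⟨j - 1 + 1, by omega⟩ = w ⟨j, by omega⟩ :=
          congrArg w (Fin.ext (show j - 1 + 1 = j by omega))
        rw [hidx] at hc
        -- transfer membership from U' back to U
        obtain ⟨s, hs, hmap⟩ := Multiset.mem_map.mp hc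
        obtain ⟨p, q, rfl⟩ := sym2_rep s
        have hp : p ≠ a := fun hh => hnota _ hs (hh ▸ (by simp : p ∈ s(p, q)))
        have hq : q ≠ a := fun hh => hnota _ hs (hh ▸ (by simp : q ∈ s(p, q)))
        rw [Sym2.map_pair_eq, hdown_ne p hp, hdown_ne q hq] at hmap
        have hmem : s(p, q) ∈ U := Multiset.mem_of_le (Multiset.erase_le e U) hs
        rcases Sym2.eq_iff.mp hmap with ⟨hp1, hq1⟩ | ⟨hp1, hq1⟩
        · have : s(p, q) = s((w ⟨j - 1, by omega⟩).val, (w ⟨j, by omega⟩).val) := by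
            rw [show p = (w ⟨j - 1, by omega⟩).val from congrArg Subtype.val hp1,
              show q = (w ⟨j, by omega⟩).val from congrArg Subtype.val hq1]
          rwa [this] at hmem
        · have : s(p, q) = s((w ⟨j, by omega⟩).val, (w ⟨j - 1, by omega⟩).val) := by
            rw [show p = (w ⟨j, by omega⟩).val from congrArg Subtype.val hp1,
              show q = (w ⟨j - 1, by omega⟩).val from congrArg Subtype.val hq1]
          rw [this, Sym2.eq_swap] at hmem
          exact hmem
    · -- Case B : all degrees equal 2
      have hdegB : ∀ v : V, (Multigraph.mk U).deg v = 2 := by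
        intro v
        push_neg at hA
        have := hdeg v
        have := hdeg1 v
        have := hA v
        omega
      obtain ⟨a⟩ := hconn.1
      obtain ⟨e, heU, haE⟩ := exists_edge_of_deg_pos (M := U) (v := a) (by rw [hdegB a]; omega)
      obtain ⟨x, hex⟩ := Sym2.mem_iff_exists.mp haE
      have hxa : x ≠ a := by
        intro hh
        rw [hh] at hex
        have hwa2 : wt a e = 2 := by rw [hex, wt_pair]; simp
        have hnota : ∀ s ∈ U.erase e, a ∉ s :=
          not_mem_erase_of_deg_eq_wt heU (by rw [hdegB a, hwa2])
        have honly : ∀ c, (Multigraph.mk U).Adj a c → c = a := by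
          intro c hadj
          have hac : s(a, c) ∈ U := hadj
          by_cases hne : s(a, c) = e
          · rw [hex] at hne
            rcases Sym2.eq_iff.mp hne with ⟨_, hc1⟩ | ⟨_, hc1⟩ <;> exact hc1
          · exact absurd (by simp) (hnota _ ((Multiset.mem_erase_of_ne hne).mpr hac))
        obtain ⟨u, hu⟩ := exists_ne a
        exact hu (rtg_loop_only honly (hconn.2 a u))
      letI : Fintype V := Fintype.ofFinite V
      have hconn' := erase_connected_of_deg_two heU hex hxa hconn hdegB
      have hcard' : Multiset.card (U.erase e) = k - 1 := by
        rw [Multiset.card_erase_of_mem heU, hcard]; rfl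
      obtain ⟨v, hbij, hcons⟩ := IH (k - 1) (by omega) V (U.erase e) hcard' hV hconn'
        (fun z => le_trans (deg_mono (Multiset.erase_le e U) z) (hdeg z))
      exact ⟨v, hbij, fun j hj => Multiset.mem_of_le (Multiset.erase_le e U) (hcons j hj)⟩

end CubicAux

namespace CubicAux
open Multigraph Relation
open scoped Classical

variable {α β : Type}

lemma deg_add_le_deg_image {W V : Type} (F : Multiset (Sym2 W)) (φ : W → V) {a b : W}
    (hab : a ≠ b) {v : V} (hva : φ a = v) (hvb : φ b = v) :
    (Multigraph.mk F).deg a + (Multigraph.mk F).deg b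
      ≤ (Multigraph.mk (F.map (Sym2.map φ))).deg v := by
  rw [deg_def, deg_def, deg_def, Multiset.map_map, ← Multiset.sum_map_add]
  apply Multiset.sum_map_le_sum_map
  intro s _
  obtain ⟨p, q, rfl⟩ := sym2_rep s
  show wt a s(p, q) + wt b s(p, q) ≤ wt v (Sym2.map φ s(p, q))
  rw [Sym2.map_pair_eq, wt_pair, wt_pair, wt_pair]
  have hind : ∀ r : W, (if r = a then (1:ℕ) else 0) + (if r = b then 1 else 0)
      ≤ if φ r = v then 1 else 0 := by
    intro r
    by_cases e1 : r = a
    · rw [if_pos e1, if_neg (by rw [e1]; exact hab), if_pos (by rw [e1, hva])]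
    · rw [if_neg e1]
      by_cases e2 : r = b
      · rw [if_pos e2, if_pos (by rw [e2, hvb])]
      · rw [if_neg e2]
        exact Nat.zero_le _
  have h1 := hind p
  have h2 := hind q
  omega

lemma deg_mk_edges (H : Multigraph α) (w : α) : (Multigraph.mk H.edges).deg w = H.deg w := rfl

lemma phi_injective {V W : Type} [Finite V] [Finite W]
    (G : Multigraph V) (h3 : ∀ v : V, G.deg v = 3)
    (U : Multiset (Sym2 V)) (hU : U ≤ G.edges)
    (hmin : ∀ U' : Multiset (Sym2 V), U' ≤ G.edges → IsKTrail (Multigraph.mk U') 2 →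
      Multiset.card U ≤ Multiset.card U')
    (H : Multigraph W) (φ : W → V)
    (Hconn : Connected H) (Hdeg : ∀ w, H.deg w ≤ 2)
    (hHom : IsHomImage (Multigraph.mk U) H φ) :
    Function.Injective φ := by
  have hUeq : U = H.edges.map (Sym2.map φ) := hom_image_edges hHom
  have key : ∀ a b : W, a ≠ b → φ a = φ b → H.deg a = 1 → False := by
    intro a b hab hphi hdeg1a
    obtain ⟨e, heF, haE⟩ := exists_edge_of_deg_pos (M := H.edges) (v := a)
      (by rw [deg_mk_edges, hdeg1a])
    obtain ⟨x, hex⟩ := Sym2.mem_iff_exists.mp haE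
    have hxa : x ≠ a := by
      intro hh
      have h2' : wt a e = 2 := by rw [hex, hh, wt_pair]; simp
      have h3' := wt_le_deg heF a
      rw [deg_mk_edges, hdeg1a] at h3'
      omega
    have hwa : wt a e = 1 := by
      rw [hex, wt_pair]
      simp [hxa]
    have hnota : ∀ s ∈ H.edges.erase e, a ∉ s :=
      not_mem_erase_of_deg_eq_wt heF (by rw [deg_mk_edges, hdeg1a, hwa])
    -- the contracted witness graph on W' = W \ {a}
    have hmem_e : Sym2.map φ e ∈ U := hUeq ▸ Multiset.mem_map_of_mem _ heF
    set U'' : Multiset (Sym2 V) := U.erase (Sym2.map φ e) with hU''def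
    have hU''eq : U'' = (H.edges.erase e).map (Sym2.map φ) := by
      rw [hU''def, hUeq, ← Multiset.cons_erase heF, Multiset.map_cons,
        Multiset.erase_cons_head, Multiset.cons_erase heF]
    set W' : Type := {w : W // w ≠ a} with hW'def
    let down : W → W' := fun u => if h : u = a then ⟨x, hxa⟩ else ⟨u, h⟩
    have hdown_ne : ∀ (u : W) (h : u ≠ a), down u = ⟨u, h⟩ := fun u h => dif_neg h
    set F' : Multiset (Sym2 W') := (H.edges.erase e).map (Sym2.map down) with hF'def
    let φ' : W' → V := fun z => φ z.val
    -- connectivity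
    have hconn' : Connected (Multigraph.mk F') := by
      refine ⟨⟨⟨x, hxa⟩⟩, fun z1 z2 => ?_⟩
      have h0 : Relation.ReflTransGen (Multigraph.mk H.edges).Adj z1.val z2.val :=
        Hconn.2 z1.val z2.val
      have h1 := splice heF hex hxa hnota h0 z1.prop z2.prop
      have hstep : ∀ p q : W, (Multigraph.mk (H.edges.erase e)).Adj p q →
          Relation.ReflTransGen (Multigraph.mk F').Adj (down p) (down q) := by
        intro p q hpq
        refine Relation.ReflTransGen.single ?_
        show s(down p, down q) ∈ F'
        rw [← Sym2.map_pair_eq down]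
        exact Multiset.mem_map_of_mem _ hpq
      have h2 := liftRTG down hstep h1
      rwa [hdown_ne _ z1.prop, hdown_ne _ z2.prop] at h2
    -- degrees
    have hwt_down : ∀ s ∈ H.edges.erase e, ∀ z : W', wt z (Sym2.map down s) = wt z.val s := by
      intro s hs z
      obtain ⟨p, q, rfl⟩ := sym2_rep s
      have hp : p ≠ a := fun hh => hnota _ hs (hh ▸ (by simp : p ∈ s(p, q)))
      have hq : q ≠ a := fun hh => hnota _ hs (hh ▸ (by simp : q ∈ s(p, q)))
      have h1 : ((⟨p, hp⟩ : W') = z) ↔ p = z.val :=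
        ⟨fun h => congrArg Subtype.val h, fun h => Subtype.ext h⟩
      have h2 : ((⟨q, hq⟩ : W') = z) ↔ q = z.val :=
        ⟨fun h => congrArg Subtype.val h, fun h => Subtype.ext h⟩
      rw [Sym2.map_pair_eq, hdown_ne p hp, hdown_ne q hq, wt_pair, wt_pair,
        ite_one_zero_congr h1, ite_one_zero_congr h2]
    have hdeg' : ∀ z : W', (Multigraph.mk F').deg z ≤ 2 := by
      intro z
      rw [hF'def, deg_map_congr _ down z z.val (fun s hs => hwt_down s hs z)]
      calc (Multigraph.mk (H.edges.erase e)).deg z.val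
          ≤ (Multigraph.mk H.edges).deg z.val := deg_mono (Multiset.erase_le _ _) _
        _ ≤ 2 := Hdeg z.val
    -- hom image
    have hsurj' : Function.Surjective φ' := by
      intro u
      obtain ⟨w, hw⟩ := hHom.1 u
      by_cases hwa' : w = a
      · exact ⟨⟨b, fun hb => hab hb.symm⟩, by
          show φ b = u
          rw [← hphi, ← hwa', hw]⟩
      · exact ⟨⟨w, hwa'⟩, hw⟩
    have hmapeq : F'.map (Sym2.map φ') = U'' := by
      rw [hF'def, Multiset.map_map, hU''eq]
      apply Multiset.map_congr rfl
      intro s hs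
      show Sym2.map φ' (Sym2.map down s) = Sym2.map φ s
      rw [Sym2.map_map]
      apply sym2_map_congr
      intro y hy
      have hya : y ≠ a := fun hh => hnota _ hs (hh ▸ hy)
      show φ' (down y) = φ y
      rw [hdown_ne y hya]
    have hhom' : IsHomImage (Multigraph.mk U'') (Multigraph.mk F') φ' := by
      refine ⟨hsurj', fun u v => ?_⟩
      show Multiset.count _ U'' = Multiset.count _ (F'.map (Sym2.map φ'))
      rw [hmapeq]
    -- contradiction with minimality
    have htrail : IsKTrail (Multigraph.mk U'') 2 :=
      ⟨W', inferInstance, Multigraph.mk F', φ', hconn', hdeg', hhom'⟩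
    have hle : U'' ≤ G.edges := le_trans (Multiset.erase_le _ _) hU
    have hminU := hmin U'' hle htrail
    have hcardU'' : Multiset.card U'' = Multiset.card U - 1 := by
      rw [hU''def, Multiset.card_erase_of_mem hmem_e]
      rfl
    have hpos : 0 < Multiset.card U := Multiset.card_pos_iff_exists_mem.mpr ⟨_, hmem_e⟩
    omega
  -- now conclude injectivity
  intro a b hphi
  by_contra hab
  have hWnt : Nontrivial W := ⟨a, b, hab⟩
  have h1a : 1 ≤ H.deg a := by
    rw [← deg_mk_edges]
    exact min_deg_one ⟨Hconn.1, Hconn.2⟩ (Ne.symm hab : b ≠ a)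
  have h1b : 1 ≤ H.deg b := by
    rw [← deg_mk_edges]
    exact min_deg_one ⟨Hconn.1, Hconn.2⟩ (hab : a ≠ b)
  have hsum : H.deg a + H.deg b ≤ 3 := by
    have h4 := deg_add_le_deg_image H.edges φ hab rfl hphi.symm
    simp only [deg_mk_edges] at h4
    rw [← hUeq] at h4
    have h5 := deg_mono hU (φ a)
    have h6 : (Multigraph.mk G.edges).deg (φ a) = 3 := by rw [deg_mk_edges, h3]
    omega
  have h2a := Hdeg a
  have h2b := Hdeg b
  by_cases hda : H.deg a = 1
  · exact key a b hab hphi hda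
  · exact key b a (Ne.symm hab) hphi.symm (by omega)

open scoped Classical in
lemma sum_indicator_le_one {γ : Type} (M : Multiset γ) (p : γ → Prop)
    (hnd : M.Nodup) (hp : ∀ i ∈ M, ∀ j ∈ M, p i → p j → i = j) :
    (M.map (fun i => if p i then (1 : ℕ) else 0)).sum ≤ 1 := by
  induction M using Multiset.induction with
  | empty => simp
  | cons a M ih =>
    rw [Multiset.map_cons, Multiset.sum_cons]
    have hna := (Multiset.nodup_cons.mp hnd).1
    have hnd' := (Multiset.nodup_cons.mp hnd).2
    by_cases hpa : p a
    · rw [if_pos hpa]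
      have hz : (M.map (fun i => if p i then (1 : ℕ) else 0)).sum = 0 := by
        apply Multiset.sum_eq_zero
        intro y hy
        obtain ⟨i, hi, rfl⟩ := Multiset.mem_map.mp hy
        rw [if_neg]
        intro hpi
        have := hp i (Multiset.mem_cons_of_mem hi) a (Multiset.mem_cons_self a M) hpi hpa
        exact hna (this ▸ hi)
      omega
    · rw [if_neg hpa, Nat.zero_add]
      exact ih hnd' (fun i hi j hj => hp i (Multiset.mem_cons_of_mem hi) j
        (Multiset.mem_cons_of_mem hj))

end CubicAux

open CubicAux

/-- In a 3-regular multigraph, a `2`-trail `(V, U)` contained in `G` with `|U|` minimum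
is a Hamiltonian path of `G`. -/
theorem cubic_min_twoTrail_isHamPath {V : Type} [Finite V]
    (hV : 2 ≤ Nat.card V)
    (G : Multigraph V) (h3 : ∀ v : V, G.deg v = 3)
    (U : Multiset (Sym2 V)) (hU : U ≤ G.edges)
    (hUtrail : IsKTrail (Multigraph.mk U) 2)
    (hmin : ∀ U' : Multiset (Sym2 V), U' ≤ G.edges → IsKTrail (Multigraph.mk U') 2 →
      Multiset.card U ≤ Multiset.card U') :
    IsHamPathEdges (V := V) U := by
  classical
  obtain ⟨W, finW, H, φ, Hconn, Hdeg, hHom⟩ := hUtrail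
  have hUeq : U = H.edges.map (Sym2.map φ) := hom_image_edges hHom
  have hinj : Function.Injective φ := phi_injective G h3 U hU hmin H φ Hconn Hdeg hHom
  have hNV : Nonempty V := by
    by_contra h
    rw [not_nonempty_iff] at h
    rw [Nat.card_of_isEmpty] at hV
    omega
  -- (V, U) is connected
  have hconnU : Connected (Multigraph.mk U) := by
    refine ⟨hNV, fun u v => ?_⟩
    obtain ⟨wu, rfl⟩ := hHom.1 u
    obtain ⟨wv, rfl⟩ := hHom.1 v
    have hstep : ∀ p q : W, H.Adj p q →
        Relation.ReflTransGen (Multigraph.mk U).Adj (φ p) (φ q) := by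
      intro p q hpq
      refine Relation.ReflTransGen.single ?_
      show s(φ p, φ q) ∈ U
      rw [hUeq, ← Sym2.map_pair_eq]
      exact Multiset.mem_map_of_mem _ hpq
    exact liftRTG φ hstep (Hconn.2 wu wv)
  -- all degrees of (V, U) are at most 2
  have hdegU : ∀ v : V, (Multigraph.mk U).deg v ≤ 2 := by
    intro v
    obtain ⟨w0, hw0⟩ := hHom.1 v
    have heq : (Multigraph.mk U).deg v = H.deg w0 := by
      rw [hUeq]
      rw [deg_map_congr H.edges φ v w0 ?_]
      intro s _
      obtain ⟨p, q, rfl⟩ := sym2_rep s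
      have h1 : (φ p = v) ↔ (p = w0) :=
        ⟨fun h => hinj (h.trans hw0.symm), fun h => h ▸ hw0⟩
      have h2 : (φ q = v) ↔ (q = w0) :=
        ⟨fun h => hinj (h.trans hw0.symm), fun h => h ▸ hw0⟩
      rw [Sym2.map_pair_eq, wt_pair, wt_pair, ite_one_zero_congr h1, ite_one_zero_congr h2]
    rw [heq]
    exact Hdeg w0
  -- enumerate the vertices along a path
  obtain ⟨v, hbij, hcons⟩ := path_enum (Multiset.card U) V U rfl (by omega) hconnU hdegU
  refine ⟨v, hbij, ?_⟩
  set P : Multiset (Sym2 V) := Multiset.map (fun i : Fin (Nat.card V - 1) =>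
      s(v ⟨i.1, by have := i.2; omega⟩, v ⟨i.1 + 1, by have := i.2; omega⟩))
      Finset.univ.val with hPdef
  -- P is a submultiset of U
  have hPnodup : P.Nodup := by
    rw [hPdef]
    refine Multiset.Nodup.map ?_ Finset.univ.nodup
    intro i1 i2 h12
    rcases Sym2.eq_iff.mp h12 with ⟨ha1, _⟩ | ⟨ha1, hb1⟩
    · have := congrArg Fin.val (hbij.injective ha1)
      exact Fin.ext (by simpa using this)
    · have c1 : i1.1 = i2.1 + 1 := by simpa using congrArg Fin.val (hbij.injective ha1)
      have c2 : i1.1 + 1 = i2.1 := by simpa using congrArg Fin.val (hbij.injective hb1)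
      omega
  have hPsub : ∀ s ∈ P, s ∈ U := by
    intro s hs
    rw [hPdef] at hs
    obtain ⟨i, _, rfl⟩ := Multiset.mem_map.mp hs
    exact hcons i.1 (by have := i.2; omega)
  have hPleU : P ≤ U := by
    rw [Multiset.le_iff_count]
    intro s
    by_cases hs : s ∈ P
    · calc Multiset.count s P ≤ 1 := Multiset.nodup_iff_count_le_one.mp hPnodup s
        _ ≤ Multiset.count s U := Multiset.count_pos.mpr (hPsub s hs)
    · rw [Multiset.count_eq_zero.mpr hs]
      exact Nat.zero_le _
  have hPcard : Multiset.card P = Nat.card V - 1 := by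
    rw [hPdef, Multiset.card_map, ← Finset.card_def, Finset.card_univ, Fintype.card_fin]
  -- (V, P) is a 2-trail
  have hchain : ∀ (k : ℕ) (hk : k < Nat.card V),
      Relation.ReflTransGen (Multigraph.mk P).Adj (v ⟨0, by omega⟩) (v ⟨k, hk⟩) := by
    intro k
    induction k with
    | zero => intro hk; exact Relation.ReflTransGen.refl
    | succ k ih =>
      intro hk
      refine (ih (by omega)).tail ?_
      show s(v ⟨k, by omega⟩, v ⟨k + 1, hk⟩) ∈ P
      rw [hPdef]
      refine Multiset.mem_map.mpr ⟨⟨k, by omega⟩, Finset.mem_val.mpr (Finset.mem_univ _), rfl⟩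
  have hconnP : Connected (Multigraph.mk P) := by
    refine ⟨hNV, fun u u' => ?_⟩
    obtain ⟨i, rfl⟩ := hbij.surjective u
    obtain ⟨i', rfl⟩ := hbij.surjective u'
    exact (rtg_adj_symm (hchain i.1 i.2)).trans (hchain i'.1 i'.2)
  have hdegP : ∀ t : V, (Multigraph.mk P).deg t ≤ 2 := by
    intro t
    rw [deg_def, hPdef, Multiset.map_map]
    have hsplit : ∀ i : Fin (Nat.card V - 1),
        (wt t ∘ fun i : Fin (Nat.card V - 1) =>
          s(v ⟨i.1, by have := i.2; omega⟩, v ⟨i.1 + 1, by have := i.2; omega⟩)) i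
        = (if v ⟨i.1, by have := i.2; omega⟩ = t then (1:ℕ) else 0)
          + (if v ⟨i.1 + 1, by have := i.2; omega⟩ = t then 1 else 0) := by
      intro i
      exact wt_pair t _ _
    rw [show Multiset.map (wt t ∘ fun i : Fin (Nat.card V - 1) =>
          s(v ⟨i.1, by have := i.2; omega⟩, v ⟨i.1 + 1, by have := i.2; omega⟩))
          Finset.univ.val
        = Multiset.map (fun i : Fin (Nat.card V - 1) =>
            (if v ⟨i.1, by have := i.2; omega⟩ = t then (1:ℕ) else 0)
            + (if v ⟨i.1 + 1, by have := i.2; omega⟩ = t then 1 else 0)) Finset.univ.val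
      from Multiset.map_congr rfl (fun i _ => hsplit i), Multiset.sum_map_add]
    have b1 := sum_indicator_le_one (Finset.univ.val (α := Fin (Nat.card V - 1)))
      (fun i => v ⟨i.1, by have := i.2; omega⟩ = t) Finset.univ.nodup ?_
    have b2 := sum_indicator_le_one (Finset.univ.val (α := Fin (Nat.card V - 1)))
      (fun i => v ⟨i.1 + 1, by have := i.2; omega⟩ = t) Finset.univ.nodup ?_
    · exact le_trans (Nat.add_le_add b1 b2) (by norm_num)
    · intro i _ j _ hi hj
      have := congrArg Fin.val (hbij.injective (hi.trans hj.symm))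
      exact Fin.ext (by simpa using this)
    · intro i _ j _ hi hj
      have := congrArg Fin.val (hbij.injective (hi.trans hj.symm))
      exact Fin.ext (by simpa using this)
  have htrailP : IsKTrail (Multigraph.mk P) 2 := by
    refine ⟨V, ‹Finite V›, Multigraph.mk P, id, hconnP, hdegP, Function.surjective_id, ?_⟩
    intro u u'
    simp [Sym2.map_id]
  -- minimality forces U = P
  have hminP := hmin P (le_trans hPleU hU) htrailP
  have := Multiset.card_le_card hPleU
  have hPU : P = U := Multiset.eq_of_le_of_card_le hPleU (by omega)
  exact hPU.symm
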